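/- For every i ∈ {1,2,3,4} and all vectors α, β ∈ ℂ²: if ⟨γ_j, α ⊗ β⟩ = 0 for all j ∈ {1,2,3,4} with j ≠ i, then α ⊗ β = 0 (i.e., α = 0 or β = 0). Equivalently, for each i the one-dimensional orthogonal complement of span{γ_j : j ≠ i} in ℂ²⊗ℂ² contains no nonzero product vector, so no member γ_i of the antiparallel double-SIC ensemble admits a product detecting state. (This is the content of the second part of Proposition 4: S^{↑↓} is not a genuinely unextendible product basis and hence does not allow conclusive local discrimination.) -/

import Mathlib

/-!
Statement 8: No member γ_i of the antiparallel double-SIC ensemble admits a product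
detecting state: if a product vector α ⊗ β is orthogonal to all γ_j with j ≠ i, then
α ⊗ β = 0.
-/

noncomputable section
open scoped ComplexInnerProductSpace

/-- The qubit Hilbert space `ℂ²`. -/
abbrev Qubit : Type := EuclideanSpace ℂ (Fin 2)

/-- The (Kronecker) tensor product of two vectors, realized in `EuclideanSpace ℂ (ι × κ)`. -/
def tp {ι κ : Type} (x : EuclideanSpace ℂ ι) (y : EuclideanSpace ℂ κ) :
    EuclideanSpace ℂ (ι × κ) :=
  (WithLp.equiv 2 (ι × κ → ℂ)).symm (fun p => x p.1 * y p.2)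

/-- A qubit vector from its two coordinates. -/
def mk2 (a b : ℂ) : Qubit := (WithLp.equiv 2 (Fin 2 → ℂ)).symm ![a, b]

/-- The cube root of unity phases `ζ k = exp(2πik/3)`. -/
def ζ (k : ℤ) : ℂ := Complex.exp (2 * (Real.pi : ℂ) * Complex.I * (k : ℂ) / 3)

/-- `1/√3` in `ℂ`. -/
def r3 : ℂ := ((Real.sqrt 3 : ℂ))⁻¹

/-- `√2` in `ℂ`. -/
def r2 : ℂ := (Real.sqrt 2 : ℂ)

/-- The qubit SIC states: `s 0 = |0⟩` and
`s j = (1/√3)(|0⟩ + √2 e^{2πi(j-1)/3} |1⟩)` for `j = 1, 2, 3`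
(indexing the paper's `s_1, …, s_4` by `Fin 4`). -/
def s : Fin 4 → Qubit :=
  ![mk2 1 0,
    mk2 r3 (r3 * r2 * ζ 0),
    mk2 r3 (r3 * r2 * ζ 1),
    mk2 r3 (r3 * r2 * ζ 2)]

/-- The orthogonal SIC states: `sperp 0 = |1⟩` and
`sperp j = (1/√3)(√2 e^{-2πi(j-1)/3} |0⟩ - |1⟩)` for `j = 1, 2, 3`. -/
def sperp : Fin 4 → Qubit :=
  ![mk2 0 1,
    mk2 (r3 * r2 * ζ 0) (-r3),
    mk2 (r3 * r2 * ζ (-1)) (-r3),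
    mk2 (r3 * r2 * ζ (-2)) (-r3)]

/-- The antiparallel double-SIC vectors `γ_i = s_i ⊗ s_i^⊥`. -/
def γ (i : Fin 4) : EuclideanSpace ℂ (Fin 2 × Fin 2) := tp (s i) (sperp i)

-- auxiliary facts
lemma zeta_zero : ζ 0 = 1 := by simp [ζ]
lemma conj_zeta (k : ℤ) : starRingEnd ℂ (ζ k) = ζ (-k) := by
  rw [ζ, ζ, ← Complex.exp_conj]
  congr 1
  simp [map_div₀, Complex.conj_I, map_ofNat]
lemma zeta_prim : IsPrimitiveRoot (ζ 1) 3 := by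
  have h := Complex.isPrimitiveRoot_exp 3 (by norm_num)
  have e : ζ 1 = Complex.exp (2 * (Real.pi:ℂ) * Complex.I / (3:ℕ)) := by
    rw [ζ]; norm_num
  rw [e]; exact h
lemma zeta_mul (a b : ℤ) : ζ a * ζ b = ζ (a + b) := by
  rw [ζ, ζ, ζ, ← Complex.exp_add]
  congr 1
  push_cast
  ring
lemma zeta_ne_zero (k : ℤ) : ζ k ≠ 0 := Complex.exp_ne_zero _
lemma zeta_two : ζ 2 = ζ 1 * ζ 1 := by rw [zeta_mul]; norm_num
lemma zeta_three : ζ 3 = 1 := by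
  have := zeta_prim.pow_eq_one
  rw [show ζ 1 ^ 3 = ζ 1 * ζ 1 * ζ 1 by ring, zeta_mul, zeta_mul] at this
  exact this
lemma zeta_neg_one : ζ (-1) = ζ 2 := by
  calc ζ (-1) = ζ (-1) * ζ 3 := by rw [zeta_three, mul_one]
    _ = ζ 2 := by rw [zeta_mul]; norm_num
lemma zeta_neg_two : ζ (-2) = ζ 1 := by
  calc ζ (-2) = ζ (-2) * ζ 3 := by rw [zeta_three, mul_one]
    _ = ζ 1 := by rw [zeta_mul]; norm_num
lemma zeta_one_ne_one : ζ 1 ≠ 1 := zeta_prim.ne_one (by norm_num)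
lemma zeta_two_ne_one : ζ 2 ≠ 1 := by
  rw [zeta_two, ← pow_two]
  exact zeta_prim.pow_ne_one_of_pos_of_lt (by norm_num) (by norm_num)
lemma zeta_one_ne_two : ζ 1 ≠ ζ 2 := by
  intro h
  rw [zeta_two] at h
  have := mul_left_cancel₀ (zeta_ne_zero 1) (by rw [mul_one, ← h] : ζ 1 * 1 = ζ 1 * ζ 1)
  exact zeta_one_ne_one this.symm
lemma r2_ne : r2 ≠ 0 := by simp [r2, Complex.ofReal_ne_zero]
lemma r3_ne : r3 ≠ 0 := by simp [r3, Complex.ofReal_ne_zero]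
lemma conj_r3 : starRingEnd ℂ r3 = r3 := by simp [r3, ← Complex.ofReal_inv]
lemma conj_r2 : starRingEnd ℂ r2 = r2 := by simp [r2]

lemma inner_tp (x y α β : Qubit) :
    ⟪tp x y, tp α β⟫ = (starRingEnd ℂ (x 0) * α 0 + starRingEnd ℂ (x 1) * α 1) *
      (starRingEnd ℂ (y 0) * β 0 + starRingEnd ℂ (y 1) * β 1) := by
  simp [tp, PiLp.inner_apply, Fintype.sum_prod_type, Fin.sum_univ_two, RCLike.inner_apply]
  ring

lemma v0 (α : Qubit) (h0 : α 0 = 0) (h1 : α 1 = 0) : α = 0 := by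
  ext i
  fin_cases i
  · exact h0
  · exact h1

lemma tp_zero_left (β : Qubit) : tp (0 : Qubit) β = 0 := by
  ext p
  show (0 : Qubit) p.1 * β p.2 = _
  simp

lemma tp_zero_right (α : Qubit) : tp α (0 : Qubit) = 0 := by
  ext p
  show α p.1 * (0 : Qubit) p.2 = _
  simp

lemma tpz (α β : Qubit) (h : (α 0 = 0 ∧ α 1 = 0) ∨ (β 0 = 0 ∧ β 1 = 0)) :
    tp α β = 0 := by
  rcases h with ⟨h0, h1⟩ | ⟨h0, h1⟩
  · rw [v0 α h0 h1]; exact tp_zero_left β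
  · rw [v0 β h0 h1]; exact tp_zero_right α

lemma Lpair {c d x0 x1 : ℂ} (hcd : c ≠ d) (h1 : x0 + c * x1 = 0) (h2 : x0 + d * x1 = 0) :
    x0 = 0 ∧ x1 = 0 := by
  have hx1 : x1 = 0 := by
    have hz : (c - d) * x1 = 0 := by linear_combination h1 - h2
    rcases mul_eq_zero.mp hz with hh | hh
    · exact absurd (sub_eq_zero.mp hh) hcd
    · exact hh
  refine ⟨?_, hx1⟩
  rw [hx1] at h1; simpa using h1

lemma Rpair {c d y0 y1 : ℂ} (hcd : c ≠ d) (h1 : c * y0 - y1 = 0) (h2 : d * y0 - y1 = 0) :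
    y0 = 0 ∧ y1 = 0 := by
  have hy0 : y0 = 0 := by
    have hz : (c - d) * y0 = 0 := by linear_combination h1 - h2
    rcases mul_eq_zero.mp hz with hh | hh
    · exact absurd (sub_eq_zero.mp hh) hcd
    · exact hh
  refine ⟨hy0, ?_⟩
  rw [hy0] at h1; simpa using h1.symm

lemma three {c1 c2 c3 d1 d2 d3 a0 a1 b0 b1 : ℂ}
    (hc12 : c1 ≠ c2) (hc13 : c1 ≠ c3) (hc23 : c2 ≠ c3)
    (hd12 : d1 ≠ d2) (hd13 : d1 ≠ d3) (hd23 : d2 ≠ d3)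
    (h1 : (a0 + c1 * a1) * (d1 * b0 - b1) = 0)
    (h2 : (a0 + c2 * a1) * (d2 * b0 - b1) = 0)
    (h3 : (a0 + c3 * a1) * (d3 * b0 - b1) = 0) :
    (a0 = 0 ∧ a1 = 0) ∨ (b0 = 0 ∧ b1 = 0) := by
  rcases mul_eq_zero.mp h1 with p1 | q1 <;>
  rcases mul_eq_zero.mp h2 with p2 | q2 <;>
  rcases mul_eq_zero.mp h3 with p3 | q3 <;>
    first
      | exact Or.inl (Lpair hc12 p1 p2)
      | exact Or.inl (Lpair hc13 p1 p3)
      | exact Or.inl (Lpair hc23 p2 p3)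
      | exact Or.inr (Rpair hd12 q1 q2)
      | exact Or.inr (Rpair hd13 q1 q3)
      | exact Or.inr (Rpair hd23 q2 q3)

lemma two {c2 c3 d2 d3 a0 a1 b0 b1 : ℂ}
    (hc2 : c2 ≠ 0) (hc3 : c3 ≠ 0) (hd2 : d2 ≠ 0) (hd3 : d3 ≠ 0)
    (hc23 : c2 ≠ c3) (hd23 : d2 ≠ d3)
    (h1 : a0 * b1 = 0)
    (h2 : (a0 + c2 * a1) * (d2 * b0 - b1) = 0)
    (h3 : (a0 + c3 * a1) * (d3 * b0 - b1) = 0) :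
    (a0 = 0 ∧ a1 = 0) ∨ (b0 = 0 ∧ b1 = 0) := by
  rcases mul_eq_zero.mp h1 with ha | hb
  · rcases mul_eq_zero.mp h2 with p2 | q2
    · left
      refine ⟨ha, ?_⟩
      rw [ha, zero_add] at p2
      exact (mul_eq_zero.mp p2).resolve_left hc2
    · rcases mul_eq_zero.mp h3 with p3 | q3
      · left
        refine ⟨ha, ?_⟩
        rw [ha, zero_add] at p3
        exact (mul_eq_zero.mp p3).resolve_left hc3
      · exact Or.inr (Rpair hd23 q2 q3)
  · rcases mul_eq_zero.mp h2 with p2 | q2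
    · rcases mul_eq_zero.mp h3 with p3 | q3
      · exact Or.inl (Lpair hc23 p2 p3)
      · right
        refine ⟨?_, hb⟩
        rw [hb, sub_zero] at q3
        exact (mul_eq_zero.mp q3).resolve_left hd3
    · right
      refine ⟨?_, hb⟩
      rw [hb, sub_zero] at q2
      exact (mul_eq_zero.mp q2).resolve_left hd2

/-- For every `i` and all `α, β ∈ ℂ²`: if `⟨γ_j, α ⊗ β⟩ = 0` for every `j ≠ i`, then
`α ⊗ β = 0`; i.e. the orthogonal complement of `span {γ_j : j ≠ i}` contains no nonzero
product vector, so no `γ_i` admits a product detecting state. -/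
theorem antiparallel_double_SIC_no_product_detecting_state (i : Fin 4) (α β : Qubit)
    (h : ∀ j : Fin 4, j ≠ i → ⟪γ j, tp α β⟫ = 0) :
    tp α β = 0 := by
  have key : ∀ j, ⟪γ j, tp α β⟫ =
      (starRingEnd ℂ (s j 0) * α 0 + starRingEnd ℂ (s j 1) * α 1) *
      (starRingEnd ℂ (sperp j 0) * β 0 + starRingEnd ℂ (sperp j 1) * β 1) := fun j =>
    inner_tp (s j) (sperp j) α β
  have hr : r3 * r3 ≠ 0 := mul_ne_zero r3_ne r3_ne
  have E0 : (0 : Fin 4) ≠ i → α 0 * β 1 = 0 := by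
    intro hne
    have hh := h 0 hne
    rw [key 0] at hh
    simp only [s, sperp, mk2, Matrix.cons_val_zero, Matrix.cons_val_one, Matrix.head_cons,
      WithLp.equiv_symm_apply, PiLp.toLp_apply, map_one, map_zero] at hh
    linear_combination hh
  have E1 : (1 : Fin 4) ≠ i → (α 0 + r2 * α 1) * (r2 * β 0 - β 1) = 0 := by
    intro hne
    have hh := h 1 hne
    rw [key 1] at hh
    simp only [s, sperp, mk2, Matrix.cons_val_zero, Matrix.cons_val_one, Matrix.head_cons,
      WithLp.equiv_symm_apply, PiLp.toLp_apply, map_mul, map_neg, map_one, conj_r3, conj_r2, conj_zeta, neg_zero,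
      zeta_zero, neg_neg, zeta_neg_one, zeta_neg_two] at hh
    have h2 : r3 * r3 * ((α 0 + r2 * α 1) * (r2 * β 0 - β 1)) = 0 := by
      linear_combination hh
    exact (mul_eq_zero.mp h2).resolve_left hr
  have E2 : (2 : Fin 4) ≠ i → (α 0 + r2 * ζ 2 * α 1) * (r2 * ζ 1 * β 0 - β 1) = 0 := by
    intro hne
    have hh := h 2 hne
    rw [key 2] at hh
    simp only [s, sperp, mk2, Matrix.cons_val_zero, Matrix.cons_val_one, Matrix.head_cons,
      Matrix.cons_val_two, Matrix.tail_cons,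
      WithLp.equiv_symm_apply, PiLp.toLp_apply, map_mul, map_neg, map_one, conj_r3, conj_r2, conj_zeta, neg_zero,
      zeta_zero, neg_neg, zeta_neg_one, zeta_neg_two] at hh
    have h2 : r3 * r3 * ((α 0 + r2 * ζ 2 * α 1) * (r2 * ζ 1 * β 0 - β 1)) = 0 := by
      linear_combination hh
    exact (mul_eq_zero.mp h2).resolve_left hr
  have E3 : (3 : Fin 4) ≠ i → (α 0 + r2 * ζ 1 * α 1) * (r2 * ζ 2 * β 0 - β 1) = 0 := by
    intro hne
    have hh := h 3 hne
    rw [key 3] at hh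
    simp only [s, sperp, mk2, Matrix.cons_val_zero, Matrix.cons_val_one, Matrix.head_cons,
      Matrix.cons_val_two, Matrix.tail_cons, Matrix.cons_val_three,
      WithLp.equiv_symm_apply, PiLp.toLp_apply, map_mul, map_neg, map_one, conj_r3, conj_r2, conj_zeta, neg_zero,
      zeta_zero, neg_neg, zeta_neg_one, zeta_neg_two] at hh
    have h2 : r3 * r3 * ((α 0 + r2 * ζ 1 * α 1) * (r2 * ζ 2 * β 0 - β 1)) = 0 := by
      linear_combination hh
    exact (mul_eq_zero.mp h2).resolve_left hr
  -- distinctness of constants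
  have hz1 : r2 ≠ r2 * ζ 1 := by
    intro hE
    exact zeta_one_ne_one (mul_left_cancel₀ r2_ne (by rw [mul_one]; exact hE)).symm
  have hz2 : r2 ≠ r2 * ζ 2 := by
    intro hE
    exact zeta_two_ne_one (mul_left_cancel₀ r2_ne (by rw [mul_one]; exact hE)).symm
  have hz12 : r2 * ζ 1 ≠ r2 * ζ 2 := fun hE => zeta_one_ne_two (mul_left_cancel₀ r2_ne hE)
  have hn0 : r2 * ζ 1 ≠ 0 := mul_ne_zero r2_ne (zeta_ne_zero 1)
  have hn0' : r2 * ζ 2 ≠ 0 := mul_ne_zero r2_ne (zeta_ne_zero 2)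
  apply tpz
  fin_cases i
  · have e1 := E1 (by decide)
    have e2 := E2 (by decide)
    have e3 := E3 (by decide)
    exact three hz2 hz1 hz12.symm hz1 hz2 hz12 e1 e2 e3
  · exact two hn0' hn0 hn0 hn0' hz12.symm hz12 (E0 (by decide))
      (E2 (by decide)) (E3 (by decide))
  · exact two r2_ne hn0 r2_ne hn0' hz1 hz2 (E0 (by decide))
      (by linear_combination E1 (by decide)) (E3 (by decide))
  · exact two r2_ne hn0' r2_ne hn0 hz2 hz1 (E0 (by decide))
      (by linear_combination E1 (by decide)) (E2 (by decide))
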